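/- Let k > 0 and s = 1 + 1/k, and let f : ℂ → ℂ be given on the open unit disk D. Suppose there exist functions g₀, ..., g_{N-1} holomorphic on D such that f(z) = Σ_{p=0}^{N-1} g_p(z)·(conj z)^p for z ∈ D, and suppose each g_p satisfies sup_{z∈D} |g_p^(n)(z)| ≤ B^(n+1)·n^(s·n) for all n ∈ ℕ (constant B > 0, convention 0^0 = 1). Then there is a constant B' > 0 such that for all pairs (l, m) ∈ ℕ²: sup_{z∈D} |∂^(l+m) f / ∂z^l ∂z̄^m (z)| ≤ B'^(l+m+1)·(l+m)^(s·(l+m)). -/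

import Mathlib

open Complex Metric Real

/-- The Wirtinger operator `∂/∂z = (1/2)(∂/∂x - i ∂/∂y)` on functions `ℂ → ℂ`. -/
noncomputable def dz (f : ℂ → ℂ) : ℂ → ℂ :=
  fun z => (fderiv ℝ f z 1 - Complex.I * fderiv ℝ f z Complex.I) / 2

/-- The Wirtinger operator `∂/∂z̄ = (1/2)(∂/∂x + i ∂/∂y)` on functions `ℂ → ℂ`. -/
noncomputable def dzbar (f : ℂ → ℂ) : ℂ → ℂ :=
  fun z => (fderiv ℝ f z 1 + Complex.I * fderiv ℝ f z Complex.I) / 2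

lemma dz_of_hasFDerivAt {f : ℂ → ℂ} {L : ℂ →L[ℝ] ℂ} {z : ℂ} (h : HasFDerivAt f L z) :
    dz f z = (L 1 - Complex.I * L Complex.I) / 2 := by
  simp [dz, h.fderiv]

lemma dzbar_of_hasFDerivAt {f : ℂ → ℂ} {L : ℂ →L[ℝ] ℂ} {z : ℂ} (h : HasFDerivAt f L z) :
    dzbar f z = (L 1 + Complex.I * L Complex.I) / 2 := by
  simp [dzbar, h.fderiv]

lemma dz_congr {f₁ f₂ : ℂ → ℂ} {s : Set ℂ} (hs : IsOpen s) (h : Set.EqOn f₁ f₂ s) {z : ℂ}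
    (hz : z ∈ s) : dz f₁ z = dz f₂ z := by
  unfold dz
  rw [(h.eventuallyEq_of_mem (hs.mem_nhds hz)).fderiv_eq]

lemma dzbar_congr {f₁ f₂ : ℂ → ℂ} {s : Set ℂ} (hs : IsOpen s) (h : Set.EqOn f₁ f₂ s) {z : ℂ}
    (hz : z ∈ s) : dzbar f₁ z = dzbar f₂ z := by
  unfold dzbar
  rw [(h.eventuallyEq_of_mem (hs.mem_nhds hz)).fderiv_eq]

lemma hasFDerivAt_conjpow (j : ℕ) (z : ℂ) :
    HasFDerivAt (fun w : ℂ => (starRingEnd ℂ w) ^ j)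
      ((((1 : ℂ →L[ℂ] ℂ).smulRight ((j : ℂ) * (starRingEnd ℂ z) ^ (j - 1))).restrictScalars ℝ).comp
        (Complex.conjCLE : ℂ →L[ℝ] ℂ)) z := by
  have hconj : HasFDerivAt (fun w : ℂ => starRingEnd ℂ w) (Complex.conjCLE : ℂ →L[ℝ] ℂ) z :=
    Complex.conjCLE.hasFDerivAt
  have hpow := ((hasDerivAt_pow j (starRingEnd ℂ z)).hasFDerivAt).restrictScalars ℝ
  exact hpow.comp z hconj

lemma term_hasFDerivAt (u : ℂ → ℂ) (j : ℕ) (z : ℂ) (hu : DifferentiableAt ℂ u z) :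
    HasFDerivAt (fun w => u w * (starRingEnd ℂ w) ^ j)
      (u z • ((((1 : ℂ →L[ℂ] ℂ).smulRight ((j : ℂ) * (starRingEnd ℂ z) ^ (j - 1))).restrictScalars ℝ).comp
        (Complex.conjCLE : ℂ →L[ℝ] ℂ)) +
        ((starRingEnd ℂ z) ^ j) • ((fderiv ℂ u z).restrictScalars ℝ)) z := by
  exact (hu.hasFDerivAt.restrictScalars ℝ).mul (hasFDerivAt_conjpow j z)

lemma term_diff (u : ℂ → ℂ) (j : ℕ) (z : ℂ) (hu : DifferentiableAt ℂ u z) :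
    DifferentiableAt ℝ (fun w => u w * (starRingEnd ℂ w) ^ j) z :=
  (term_hasFDerivAt u j z hu).differentiableAt

lemma fderiv_apply_eq (u : ℂ → ℂ) (z w : ℂ) (hu : DifferentiableAt ℂ u z) :
    fderiv ℂ u z w = w * deriv u z := by
  conv_lhs => rw [show w = w • (1 : ℂ) by simp]
  rw [map_smul]
  simp [fderiv_apply_one_eq_deriv, smul_eq_mul]

lemma dz_term (u : ℂ → ℂ) (j : ℕ) (z : ℂ) (hu : DifferentiableAt ℂ u z) :
    dz (fun w => u w * (starRingEnd ℂ w) ^ j) z = deriv u z * (starRingEnd ℂ z) ^ j := by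
  rw [dz_of_hasFDerivAt (term_hasFDerivAt u j z hu)]
  simp only [ContinuousLinearMap.add_apply, ContinuousLinearMap.smul_apply,
    ContinuousLinearMap.coe_comp', Function.comp_apply, ContinuousLinearEquiv.coe_coe,
    Complex.conjCLE_apply, ContinuousLinearMap.coe_restrictScalars',
    ContinuousLinearMap.smulRight_apply, ContinuousLinearMap.one_apply,
    fderiv_apply_eq u z _ hu, map_one, Complex.conj_I, smul_eq_mul]
  ring_nf
  simp [Complex.I_sq]
  ring

lemma dzbar_term (u : ℂ → ℂ) (j : ℕ) (z : ℂ) (hu : DifferentiableAt ℂ u z) :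
    dzbar (fun w => u w * (starRingEnd ℂ w) ^ j) z
      = u z * (j : ℂ) * (starRingEnd ℂ z) ^ (j - 1) := by
  rw [dzbar_of_hasFDerivAt (term_hasFDerivAt u j z hu)]
  simp only [ContinuousLinearMap.add_apply, ContinuousLinearMap.smul_apply,
    ContinuousLinearMap.coe_comp', Function.comp_apply, ContinuousLinearEquiv.coe_coe,
    Complex.conjCLE_apply, ContinuousLinearMap.coe_restrictScalars',
    ContinuousLinearMap.smulRight_apply, ContinuousLinearMap.one_apply,
    fderiv_apply_eq u z _ hu, map_one, Complex.conj_I, smul_eq_mul]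
  ring_nf
  simp [Complex.I_sq]
  ring

lemma dz_sum (t : ℕ → ℂ → ℂ) (F : Finset ℕ) (z : ℂ)
    (ht : ∀ p ∈ F, DifferentiableAt ℝ (t p) z) :
    dz (fun w => ∑ p ∈ F, t p w) z = ∑ p ∈ F, dz (t p) z := by
  have h := HasFDerivAt.fun_sum (fun p hp => (ht p hp).hasFDerivAt)
  rw [dz_of_hasFDerivAt h]
  unfold dz
  rw [ContinuousLinearMap.sum_apply, ContinuousLinearMap.sum_apply, Finset.mul_sum,
    ← Finset.sum_sub_distrib, ← Finset.sum_div]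

lemma dzbar_sum (t : ℕ → ℂ → ℂ) (F : Finset ℕ) (z : ℂ)
    (ht : ∀ p ∈ F, DifferentiableAt ℝ (t p) z) :
    dzbar (fun w => ∑ p ∈ F, t p w) z = ∑ p ∈ F, dzbar (t p) z := by
  have h := HasFDerivAt.fun_sum (fun p hp => (ht p hp).hasFDerivAt)
  rw [dzbar_of_hasFDerivAt h]
  unfold dzbar
  rw [ContinuousLinearMap.sum_apply, ContinuousLinearMap.sum_apply, Finset.mul_sum,
    ← Finset.sum_add_distrib, ← Finset.sum_div]

theorem stmt19 (k : ℝ) (hk : 0 < k) (N : ℕ) (hN : 1 ≤ N) (f : ℂ → ℂ) (g : ℕ → ℂ → ℂ)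
    (hg : ∀ p < N, DifferentiableOn ℂ (g p) (Metric.ball (0 : ℂ) 1))
    (hf : ∀ z ∈ Metric.ball (0 : ℂ) 1,
      f z = ∑ p ∈ Finset.range N, g p z * (starRingEnd ℂ z) ^ p)
    (B : ℝ) (hB : 0 < B)
    (hgder : ∀ p < N, ∀ n : ℕ, ∀ z ∈ Metric.ball (0 : ℂ) 1,
      ‖iteratedDerivWithin n (g p) (Metric.ball (0 : ℂ) 1) z‖ ≤
        B ^ (n + 1) * (n : ℝ) ^ ((1 + 1 / k) * n)) :
    ∃ B' : ℝ, 0 < B' ∧ ∀ l m : ℕ, ∀ z ∈ Metric.ball (0 : ℂ) 1,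
      ‖dz^[l] (dzbar^[m] f) z‖ ≤
        B' ^ (l + m + 1) * ((l + m : ℕ) : ℝ) ^ ((1 + 1 / k) * (l + m)) := by
  have hso : IsOpen (Metric.ball (0 : ℂ) 1) := isOpen_ball
  -- analyticity of iterated derivatives of the g p
  have han : ∀ p < N, ∀ l : ℕ,
      AnalyticOnNhd ℂ (iteratedDeriv l (g p)) (Metric.ball (0 : ℂ) 1) := by
    intro p hp l
    induction l with
    | zero => simpa [iteratedDeriv_zero] using (hg p hp).analyticOnNhd hso
    | succ l ih => rw [iteratedDeriv_succ]; exact ih.deriv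
  have hdiff : ∀ p < N, ∀ l : ℕ, ∀ z ∈ Metric.ball (0 : ℂ) 1,
      DifferentiableAt ℂ (iteratedDeriv l (g p)) z :=
    fun p hp l z hz => ((han p hp l) z hz).differentiableAt
  -- the key formula for iterated Wirtinger derivatives
  have key : ∀ m l : ℕ, ∀ z ∈ Metric.ball (0 : ℂ) 1,
      dz^[l] (dzbar^[m] f) z = ∑ p ∈ Finset.range N,
        iteratedDeriv l (g p) z * (Nat.descFactorial p m : ℂ) * (starRingEnd ℂ z) ^ (p - m) := by
    intro m
    have base : ∀ z ∈ Metric.ball (0 : ℂ) 1, dzbar^[m] f z = ∑ p ∈ Finset.range N,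
        g p z * (Nat.descFactorial p m : ℂ) * (starRingEnd ℂ z) ^ (p - m) := by
      induction m with
      | zero => intro z hz; simpa using hf z hz
      | succ m ih =>
        intro z hz
        rw [Function.iterate_succ_apply']
        rw [dzbar_congr hso (fun w hw => ih w hw) hz]
        rw [dzbar_sum _ _ _ (fun p hp => term_diff _ (p - m) z
          (((hg p (Finset.mem_range.mp hp) z hz).differentiableAt
            (hso.mem_nhds hz)).mul_const _))]
        refine Finset.sum_congr rfl fun p hp => ?_
        rw [dzbar_term _ (p - m) z (((hg p (Finset.mem_range.mp hp) z hz).differentiableAt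
          (hso.mem_nhds hz)).mul_const _)]
        rw [Nat.sub_sub, Nat.descFactorial_succ]
        push_cast
        ring
    intro l
    induction l with
    | zero => intro z hz; simpa [iteratedDeriv_zero] using base z hz
    | succ l ih =>
      intro z hz
      rw [Function.iterate_succ_apply']
      rw [dz_congr hso (fun w hw => ih w hw) hz]
      rw [dz_sum _ _ _ (fun p hp => term_diff _ (p - m) z
        ((hdiff p (Finset.mem_range.mp hp) l z hz).mul_const _))]
      refine Finset.sum_congr rfl fun p hp => ?_
      rw [dz_term _ (p - m) z ((hdiff p (Finset.mem_range.mp hp) l z hz).mul_const _)]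
      rw [deriv_mul_const (hdiff p (Finset.mem_range.mp hp) l z hz), ← iteratedDeriv_succ]
  -- conversion of the global bound
  have hIW : ∀ p < N, ∀ l : ℕ, ∀ z ∈ Metric.ball (0 : ℂ) 1,
      ‖iteratedDeriv l (g p) z‖ ≤ B ^ (l + 1) * (l : ℝ) ^ ((1 + 1 / k) * l) := by
    intro p hp l z hz
    have : iteratedDerivWithin l (g p) (Metric.ball (0 : ℂ) 1) z = iteratedDeriv l (g p) z := by
      simp only [iteratedDerivWithin, iteratedDeriv,
        iteratedFDerivWithin_of_isOpen l hso hz]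
    rw [← this]
    exact hgder p hp l z hz
  refine ⟨(N + 1) * (B + 1), by positivity, fun l m z hz => ?_⟩
  rw [key m l z hz]
  have hz1 : ‖z‖ < 1 := by simpa using mem_ball_zero_iff.mp hz
  have hstep : ∀ p ∈ Finset.range N,
      ‖iteratedDeriv l (g p) z * (Nat.descFactorial p m : ℂ) * (starRingEnd ℂ z) ^ (p - m)‖
        ≤ (B ^ (l + 1) * (l : ℝ) ^ ((1 + 1 / k) * l)) * (N : ℝ) ^ m := by
    intro p hp
    have hp' := Finset.mem_range.mp hp
    rw [norm_mul, norm_mul, norm_pow, Complex.norm_natCast, RCLike.norm_conj]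
    have h1 : ‖iteratedDeriv l (g p) z‖ ≤ B ^ (l + 1) * (l : ℝ) ^ ((1 + 1 / k) * l) :=
      hIW p hp' l z hz
    have h2 : ((Nat.descFactorial p m : ℕ) : ℝ) ≤ (N : ℝ) ^ m := by
      rw [show ((N : ℝ) ^ m) = ((N ^ m : ℕ) : ℝ) by push_cast; ring]
      exact_mod_cast le_trans (Nat.descFactorial_le_pow p m) (Nat.pow_le_pow_left hp'.le m)
    have h3 : ‖z‖ ^ (p - m) ≤ 1 := pow_le_one₀ (norm_nonneg z) hz1.le
    calc ‖iteratedDeriv l (g p) z‖ * ((Nat.descFactorial p m : ℕ) : ℝ) * ‖z‖ ^ (p - m)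
        ≤ (B ^ (l + 1) * (l : ℝ) ^ ((1 + 1 / k) * l)) * ((N : ℝ) ^ m) * 1 := by
          gcongr <;> first
            | exact Real.rpow_nonneg (Nat.cast_nonneg l) _
            | exact h1
            | exact h2
            | exact h3
      _ = (B ^ (l + 1) * (l : ℝ) ^ ((1 + 1 / k) * l)) * (N : ℝ) ^ m := by ring
  have hsum := norm_sum_le (Finset.range N) (fun p =>
    iteratedDeriv l (g p) z * (Nat.descFactorial p m : ℂ) * (starRingEnd ℂ z) ^ (p - m))
  have hsum2 := Finset.sum_le_sum hstep
  rw [Finset.sum_const, Finset.card_range, nsmul_eq_mul] at hsum2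
  refine le_trans (le_trans hsum hsum2) ?_
  -- final arithmetic
  have hs1 : (1 : ℝ) ≤ 1 + 1 / k := by
    have : 0 < 1 / k := by positivity
    linarith
  have hrpow : (l : ℝ) ^ ((1 + 1 / k) * l) ≤ ((l + m : ℕ) : ℝ) ^ ((1 + 1 / k) * (l + m)) := by
    rcases Nat.eq_zero_or_pos l with hl | hl
    · subst hl
      simp only [Nat.cast_zero, mul_zero, Real.rpow_zero]
      rcases Nat.eq_zero_or_pos m with hm | hm
      · simp [hm]
      · apply Real.one_le_rpow
        · exact_mod_cast Nat.one_le_iff_ne_zero.mpr (by omega)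
        · positivity
    · calc (l : ℝ) ^ ((1 + 1 / k) * l)
          ≤ ((l + m : ℕ) : ℝ) ^ ((1 + 1 / k) * l) := by
            apply Real.rpow_le_rpow (Nat.cast_nonneg l) (by exact_mod_cast Nat.le_add_right l m)
            positivity
        _ ≤ ((l + m : ℕ) : ℝ) ^ ((1 + 1 / k) * (l + m)) := by
            apply Real.rpow_le_rpow_of_exponent_le
            · exact_mod_cast Nat.one_le_iff_ne_zero.mpr (by omega)
            · push_cast
              nlinarith [hs1, Nat.cast_nonneg (α := ℝ) l, Nat.cast_nonneg (α := ℝ) m]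
  have hcoef : (N : ℝ) * (B ^ (l + 1) * (l : ℝ) ^ ((1 + 1 / k) * l) * (N : ℝ) ^ m)
      ≤ ((N + 1) * (B + 1)) ^ (l + m + 1) * ((l + m : ℕ) : ℝ) ^ ((1 + 1 / k) * (l + m)) := by
    have hNB : (N : ℝ) * B ^ (l + 1) * (N : ℝ) ^ m ≤ ((N + 1) * (B + 1)) ^ (l + m + 1) := by
      rw [mul_pow]
      calc (N : ℝ) * B ^ (l + 1) * (N : ℝ) ^ m
          = (N : ℝ) ^ (m + 1) * B ^ (l + 1) := by ring
        _ ≤ ((N : ℝ) + 1) ^ (l + m + 1) * (B + 1) ^ (l + m + 1) := by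
            gcongr
            · exact le_trans (by gcongr <;> linarith [Nat.cast_nonneg (α := ℝ) N])
                (pow_le_pow_right₀ (by linarith [Nat.cast_nonneg (α := ℝ) N]) (by omega) :
                  ((N : ℝ) + 1) ^ (m + 1) ≤ ((N : ℝ) + 1) ^ (l + m + 1))
            · exact le_trans (by gcongr <;> linarith)
                (pow_le_pow_right₀ (by linarith) (by omega) :
                  (B + 1) ^ (l + 1) ≤ (B + 1) ^ (l + m + 1))
        _ = ((N : ℝ) + 1) ^ (l + m + 1) * (B + 1) ^ (l + m + 1) := rfl
    calc (N : ℝ) * (B ^ (l + 1) * (l : ℝ) ^ ((1 + 1 / k) * l) * (N : ℝ) ^ m)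
        = ((N : ℝ) * B ^ (l + 1) * (N : ℝ) ^ m) * (l : ℝ) ^ ((1 + 1 / k) * l) := by ring
      _ ≤ ((N + 1) * (B + 1)) ^ (l + m + 1) * ((l + m : ℕ) : ℝ) ^ ((1 + 1 / k) * (l + m)) := by
          apply mul_le_mul hNB hrpow (Real.rpow_nonneg (Nat.cast_nonneg l) _) (by positivity)
  exact le_trans (le_of_eq (by ring)) hcoef
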